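/- For every n ≥ 0, the number of words L ∈ 𝓛_n with no P1-match and no P6-match (equivalently, lattice paths from (0,0) to (n,n) that stay weakly between the lines y = x − 1 and y = x + 1) equals 2^n. -/

import Mathlib

/-!
Words over the alphabet {E, N} are encoded as `List Bool`,
with `true` representing an east step `E` and `false` a north step `N`.
The word `w = w_1 ⋯ w_{2n}` corresponds to the lattice path from `(0,0)` to
`(n,n)` whose `j`-th step is east if `w_j = true` and north if `w_j = false`.
-/

/-- `w ∈ 𝓛_n`: the word `w` has exactly `n` `E`'s and `n` `N`'s. -/
def memL (n : ℕ) (w : List Bool) : Prop :=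
  w.count true = n ∧ w.count false = n

/-- The (0-indexed, increasing) list of positions at which the letter `b` occurs in `w`. -/
def occPos (w : List Bool) (b : Bool) : List ℕ :=
  (List.range w.length).filter (fun j => w.getD j (!b) == b)

/-- `ps_w({i, i+1})` (with `i` 1-indexed): the length-4 word obtained from `w` by
deleting, for each `j ∉ {i, i+1}`, the `j`-th occurrence of `E` and the `j`-th
occurrence of `N` (counted from left to right); i.e. the word formed by the
`i`-th and `(i+1)`-th occurrences of `E` and of `N`, read in their original order. -/
def pairedSubword (w : List Bool) (i : ℕ) : List Bool :=
  let keep : List ℕ := [(occPos w true).getD (i-1) 0, (occPos w true).getD i 0,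
                        (occPos w false).getD (i-1) 0, (occPos w false).getD i 0]
  ((List.range w.length).filter (fun j => keep.contains j)).map (fun j => w.getD j true)

/-- `P`-mch(w): the number of paired steps `i` with `1 ≤ i ≤ n-1` at which the
paired pattern `P` matches in `w ∈ 𝓛_n`. -/
def pmch (n : ℕ) (P w : List Bool) : ℕ :=
  ((Finset.Icc 1 (n-1)).filter (fun i => pairedSubword w i = P)).card

def P1 : List Bool := [true, true, false, false]   -- EENN
def P2 : List Bool := [true, false, true, false]   -- ENEN
def P3 : List Bool := [false, true, true, false]   -- NEEN
def P4 : List Bool := [true, false, false, true]   -- ENNE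
def P5 : List Bool := [false, true, false, true]   -- NENE
def P6 : List Bool := [false, false, true, true]   -- NNEE

lemma occPos_nil (b : Bool) : occPos [] b = [] := rfl

lemma occPos_cons (a : Bool) (l : List Bool) (b : Bool) :
    occPos (a :: l) b = (if a == b then [0] else []) ++ (occPos l b).map (· + 1) := by
  unfold occPos
  rw [List.length_cons, List.range_succ_eq_map, List.filter_cons, List.filter_map]
  simp only [List.getD_cons_zero, Function.comp_def, Nat.succ_eq_add_one, List.getD_cons_succ]
  split <;> simp_all

lemma length_occPos (w : List Bool) (b : Bool) : (occPos w b).length = w.count b := by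
  induction w with
  | nil => rfl
  | cons a l ih =>
    rw [occPos_cons, List.count_cons]
    cases a <;> cases b <;> simp_all

lemma mem_occPos {w : List Bool} {b : Bool} {j : ℕ} :
    j ∈ occPos w b ↔ j < w.length ∧ w.getD j (!b) = b := by
  simp [occPos, List.mem_filter, List.mem_range]

lemma sorted_occPos (w : List Bool) (b : Bool) : (occPos w b).Pairwise (· < ·) :=
  List.pairwise_lt_range.filter _

def decode : List Bool → List Bool
  | [] => []
  | b :: bs => b :: (!b) :: decode bs

lemma decode_length (bs : List Bool) : (decode bs).length = 2 * bs.length := by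
  induction bs with
  | nil => rfl
  | cons b bs ih => simp [decode, ih]; omega

lemma count_decode (bs : List Bool) (c : Bool) : (decode bs).count c = bs.length := by
  induction bs with
  | nil => rfl
  | cons b bs ih => cases b <;> cases c <;> simp_all [decode, List.count_cons]

lemma occPos_decode_cons (b : Bool) (bs : List Bool) (c : Bool) :
    occPos (decode (b :: bs)) c
      = (if b == c then 0 else 1) :: (occPos (decode bs) c).map (· + 2) := by
  show occPos (b :: (!b) :: decode bs) c = _
  rw [occPos_cons, occPos_cons, List.map_append, List.map_map]
  cases b <;> cases c <;>
    simp [Function.comp_def, List.map_map] <;>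
    exact List.map_congr_left (fun x _ => by omega)

lemma getD_map_add2 (l : List ℕ) {k : ℕ} (h : k < l.length) :
    (l.map (· + 2)).getD k 0 = l.getD k 0 + 2 := by
  rw [List.getD_eq_getElem _ _ (by simpa using h), List.getElem_map,
    List.getD_eq_getElem _ _ h]

lemma occPos_decode_bound (bs : List Bool) (c : Bool) :
    ∀ k, k < bs.length →
      2 * k ≤ (occPos (decode bs) c).getD k 0 ∧ (occPos (decode bs) c).getD k 0 ≤ 2 * k + 1 := by
  induction bs with
  | nil => intro k hk; simp at hk
  | cons b bs ih =>
    intro k hk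
    rw [occPos_decode_cons]
    match k with
    | 0 => simp only [List.getD_cons_zero]; split <;> omega
    | k + 1 =>
      have hk' : k < bs.length := by simpa using hk
      have hlen : k < (occPos (decode bs) c).length := by
        rw [length_occPos, count_decode]; exact hk'
      rw [List.getD_cons_succ, getD_map_add2 _ hlen]
      have := ih k hk'
      omega

lemma getD_irrel {l : List Bool} {j : ℕ} (h : j < l.length) (d d' : Bool) :
    l.getD j d = l.getD j d' := by
  rw [List.getD_eq_getElem _ _ h, List.getD_eq_getElem _ _ h]

lemma occPos_pos_lt (w : List Bool) (b : Bool) {k : ℕ} (h : k < (occPos w b).length) :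
    (occPos w b).getD k 0 < w.length ∧ w.getD ((occPos w b).getD k 0) (!b) = b := by
  rw [List.getD_eq_getElem _ _ h]
  exact mem_occPos.mp (List.getElem_mem h)

lemma occPos_strictMono (w : List Bool) (b : Bool) {k l : ℕ} (hkl : k < l)
    (hl : l < (occPos w b).length) :
    (occPos w b).getD k 0 < (occPos w b).getD l 0 := by
  have hk : k < (occPos w b).length := lt_trans hkl hl
  rw [List.getD_eq_getElem _ _ hk, List.getD_eq_getElem _ _ hl]
  exact List.pairwise_iff_getElem.mp (sorted_occPos w b) k l hk hl hkl

lemma occPos_true_ne_false (w : List Bool) {k l : ℕ} (hk : k < (occPos w true).length)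
    (hl : l < (occPos w false).length) :
    (occPos w true).getD k 0 ≠ (occPos w false).getD l 0 := by
  intro h
  have h1 := occPos_pos_lt w true hk
  have h2 := occPos_pos_lt w false hl
  rw [h] at h1
  rw [getD_irrel h2.1 (!true) (!false)] at h1
  rw [h1.2] at h2
  exact absurd h2.2 (by simp)

lemma filter_keep {L : ℕ} (keep l : List ℕ) (hs : l.Pairwise (· < ·))
    (hl : ∀ x ∈ l, x < L) (hm : ∀ j, j ∈ keep ↔ j ∈ l) :
    (List.range L).filter (fun j => keep.contains j) = l := by
  have hnd : l.Nodup := hs.imp (fun h => Nat.ne_of_lt h)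
  have hnd2 : ((List.range L).filter (fun j => keep.contains j)).Nodup :=
    List.nodup_range.filter _
  have hperm : ((List.range L).filter (fun j => keep.contains j)).Perm l := by
    rw [List.perm_ext_iff_of_nodup hnd2 hnd]
    intro a
    simp only [List.mem_filter, List.mem_range, List.elem_iff, decide_eq_true_eq]
    constructor
    · rintro ⟨_, h⟩; exact (hm a).mp (by simpa using h)
    · intro h; exact ⟨hl a h, by simpa using (hm a).mpr h⟩
  exact List.Perm.eq_of_pairwise (fun a b _ _ h1 h2 => absurd (lt_trans h1 h2) (lt_irrefl _)) (List.pairwise_lt_range.filter _) hs hperm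

lemma pairedSubword_eval (w : List Bool) (i : ℕ) (l : List ℕ)
    (hs : l.Pairwise (· < ·)) (hl : ∀ x ∈ l, x < w.length)
    (hm : ∀ j, j ∈ [(occPos w true).getD (i-1) 0, (occPos w true).getD i 0,
                    (occPos w false).getD (i-1) 0, (occPos w false).getD i 0] ↔ j ∈ l) :
    pairedSubword w i = l.map (fun j => w.getD j true) := by
  show List.map _ (List.filter _ _) = _
  rw [filter_keep _ l hs hl hm]

lemma memL_length {n : ℕ} {w : List Bool} (hw : memL n w) : w.length = 2 * n := by
  have h := List.length_eq_countP_add_countP (· == true) (l := w)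
  have h2 : w.countP (fun a => decide ¬((a == true) = true)) = w.countP (· == false) :=
    List.countP_congr (fun a _ => by cases a <;> rfl)
  have hc1 : w.countP (· == true) = n := hw.1
  have hc2 : w.countP (· == false) = n := hw.2
  omega

lemma match_P1 {n : ℕ} {w : List Bool} (hw : memL n w) {i : ℕ} (hi1 : 1 ≤ i) (hi2 : i < n)
    (h : (occPos w true).getD i 0 < (occPos w false).getD (i-1) 0) :
    pairedSubword w i = P1 := by
  have hlt : (occPos w true).length = n := by rw [length_occPos]; exact hw.1
  have hlf : (occPos w false).length = n := by rw [length_occPos]; exact hw.2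
  have hli1 : i - 1 < n := by omega
  have hab : (occPos w true).getD (i-1) 0 < (occPos w true).getD i 0 :=
    occPos_strictMono w true (by omega) (by omega)
  have hcd : (occPos w false).getD (i-1) 0 < (occPos w false).getD i 0 :=
    occPos_strictMono w false (by omega) (by omega)
  have ha := occPos_pos_lt w true (k := i-1) (by omega)
  have hb := occPos_pos_lt w true (k := i) (by omega)
  have hc := occPos_pos_lt w false (k := i-1) (by omega)
  have hd := occPos_pos_lt w false (k := i) (by omega)
  rw [pairedSubword_eval w i [(occPos w true).getD (i-1) 0, (occPos w true).getD i 0,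
      (occPos w false).getD (i-1) 0, (occPos w false).getD i 0]
      (by rw [← List.isChain_iff_pairwise]
          simp only [List.isChain_cons_cons, List.isChain_singleton, and_true]
          omega)
      (by intro x hx
          simp only [List.mem_cons, List.not_mem_nil, or_false] at hx
          rcases hx with h|h|h|h <;> subst h <;> omega)
      (fun j => Iff.rfl)]
  simp only [List.map_cons, List.map_nil, P1]
  rw [getD_irrel ha.1 true false, getD_irrel hb.1 true false]
  have ha2 : w.getD ((occPos w true).getD (i-1) 0) false = true := by simpa using ha.2
  have hb2 : w.getD ((occPos w true).getD i 0) false = true := by simpa using hb.2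
  have hc2 : w.getD ((occPos w false).getD (i-1) 0) true = false := by simpa using hc.2
  have hd2 : w.getD ((occPos w false).getD i 0) true = false := by simpa using hd.2
  rw [ha2, hb2, hc2, hd2]

lemma match_P6 {n : ℕ} {w : List Bool} (hw : memL n w) {i : ℕ} (hi1 : 1 ≤ i) (hi2 : i < n)
    (h : (occPos w false).getD i 0 < (occPos w true).getD (i-1) 0) :
    pairedSubword w i = P6 := by
  have hlt : (occPos w true).length = n := by rw [length_occPos]; exact hw.1
  have hlf : (occPos w false).length = n := by rw [length_occPos]; exact hw.2
  have hab : (occPos w true).getD (i-1) 0 < (occPos w true).getD i 0 :=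
    occPos_strictMono w true (by omega) (by omega)
  have hcd : (occPos w false).getD (i-1) 0 < (occPos w false).getD i 0 :=
    occPos_strictMono w false (by omega) (by omega)
  have ha := occPos_pos_lt w true (k := i-1) (by omega)
  have hb := occPos_pos_lt w true (k := i) (by omega)
  have hc := occPos_pos_lt w false (k := i-1) (by omega)
  have hd := occPos_pos_lt w false (k := i) (by omega)
  rw [pairedSubword_eval w i [(occPos w false).getD (i-1) 0, (occPos w false).getD i 0,
      (occPos w true).getD (i-1) 0, (occPos w true).getD i 0]
      (by rw [← List.isChain_iff_pairwise]
          simp only [List.isChain_cons_cons, List.isChain_singleton, and_true]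
          omega)
      (by intro x hx
          simp only [List.mem_cons, List.not_mem_nil, or_false] at hx
          rcases hx with h|h|h|h <;> subst h <;> omega)
      (fun j => by simp; tauto)]
  simp only [List.map_cons, List.map_nil, P6]
  rw [getD_irrel ha.1 true false, getD_irrel hb.1 true false]
  have ha2 : w.getD ((occPos w true).getD (i-1) 0) false = true := by simpa using ha.2
  have hb2 : w.getD ((occPos w true).getD i 0) false = true := by simpa using hb.2
  have hc2 : w.getD ((occPos w false).getD (i-1) 0) true = false := by simpa using hc.2
  have hd2 : w.getD ((occPos w false).getD i 0) true = false := by simpa using hd.2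
  rw [ha2, hb2, hc2, hd2]

lemma no_match_blocks {n : ℕ} {w : List Bool} (hw : memL n w)
    (h1 : pmch n P1 w = 0) (h6 : pmch n P6 w = 0) :
    ∀ k, k < n →
      ((occPos w true).getD k 0 = 2*k ∧ (occPos w false).getD k 0 = 2*k+1) ∨
      ((occPos w true).getD k 0 = 2*k+1 ∧ (occPos w false).getD k 0 = 2*k) := by
  have hlt : (occPos w true).length = n := by rw [length_occPos]; exact hw.1
  have hlf : (occPos w false).length = n := by rw [length_occPos]; exact hw.2
  have hlw := memL_length hw
  have key1 : ∀ i, 1 ≤ i → i < n →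
      (occPos w false).getD (i-1) 0 < (occPos w true).getD i 0 := by
    intro i hi1 hi2
    by_contra hcon
    push_neg at hcon
    have hne := occPos_true_ne_false w (k := i) (l := i-1) (by omega) (by omega)
    have hlt' : (occPos w true).getD i 0 < (occPos w false).getD (i-1) 0 :=
      lt_of_le_of_ne hcon hne
    have hm := match_P1 hw hi1 hi2 hlt'
    have hemp := Finset.filter_eq_empty_iff.mp (Finset.card_eq_zero.mp h1)
    exact hemp (Finset.mem_Icc.mpr ⟨hi1, by omega⟩) hm
  have key6 : ∀ i, 1 ≤ i → i < n →
      (occPos w true).getD (i-1) 0 < (occPos w false).getD i 0 := by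
    intro i hi1 hi2
    by_contra hcon
    push_neg at hcon
    have hne := occPos_true_ne_false w (k := i-1) (l := i) (by omega) (by omega)
    have hlt' : (occPos w false).getD i 0 < (occPos w true).getD (i-1) 0 :=
      lt_of_le_of_ne hcon (Ne.symm hne)
    have hm := match_P6 hw hi1 hi2 hlt'
    have hemp := Finset.filter_eq_empty_iff.mp (Finset.card_eq_zero.mp h6)
    exact hemp (Finset.mem_Icc.mpr ⟨hi1, by omega⟩) hm
  have low : ∀ k, k < n → 2*k ≤ (occPos w true).getD k 0 ∧ 2*k ≤ (occPos w false).getD k 0 := by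
    intro k
    induction k with
    | zero => intro _; omega
    | succ k ih =>
      intro hk
      have hk' : k < n := by omega
      obtain ⟨l1, l2⟩ := ih hk'
      have he := occPos_strictMono w true (k := k) (l := k+1) (by omega) (by omega)
      have hf := occPos_strictMono w false (k := k) (l := k+1) (by omega) (by omega)
      have h1' : (occPos w false).getD k 0 < (occPos w true).getD (k+1) 0 := by
        simpa using key1 (k+1) (by omega) (by omega)
      have h6' : (occPos w true).getD k 0 < (occPos w false).getD (k+1) 0 := by
        simpa using key6 (k+1) (by omega) (by omega)
      have hne := occPos_true_ne_false w (k := k) (l := k) (by omega) (by omega)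
      omega
  have high : ∀ j k, k < n → n ≤ k + 1 + j →
      (occPos w true).getD k 0 ≤ 2*k+1 ∧ (occPos w false).getD k 0 ≤ 2*k+1 := by
    intro j
    induction j with
    | zero =>
      intro k hk hk2
      have he := occPos_pos_lt w true (k := k) (by omega)
      have hf := occPos_pos_lt w false (k := k) (by omega)
      omega
    | succ j ih =>
      intro k hk hk2
      by_cases hlast : k + 1 = n
      · have he := occPos_pos_lt w true (k := k) (by omega)
        have hf := occPos_pos_lt w false (k := k) (by omega)
        omega
      · have hk1 : k + 1 < n := by omega
        obtain ⟨u1, u2⟩ := ih (k+1) hk1 (by omega)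
        have he := occPos_strictMono w true (k := k) (l := k+1) (by omega) (by omega)
        have hf := occPos_strictMono w false (k := k) (l := k+1) (by omega) (by omega)
        have h1' : (occPos w false).getD k 0 < (occPos w true).getD (k+1) 0 := by
          simpa using key1 (k+1) (by omega) (by omega)
        have h6' : (occPos w true).getD k 0 < (occPos w false).getD (k+1) 0 := by
          simpa using key6 (k+1) (by omega) (by omega)
        have hne := occPos_true_ne_false w (k := k+1) (l := k+1) (by omega) (by omega)
        omega
  intro k hk
  have hL := low k hk
  have hH := high n k hk (by omega)
  have hne := occPos_true_ne_false w (k := k) (l := k) (by omega) (by omega)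
  omega

lemma decode_getD_even : ∀ (bs : List Bool) (k : ℕ), k < bs.length →
    (decode bs).getD (2*k) true = bs.getD k true := by
  intro bs
  induction bs with
  | nil => intro k hk; simp at hk
  | cons b bs ih =>
    intro k hk
    match k with
    | 0 => rfl
    | k + 1 =>
      have h2 : 2*(k+1) = (2*k) + 1 + 1 := by ring
      rw [h2]
      show (decode bs).getD (2*k) true = bs.getD k true
      exact ih k (by simpa using hk)

lemma decode_getD_odd : ∀ (bs : List Bool) (k : ℕ), k < bs.length →
    (decode bs).getD (2*k+1) true = !(bs.getD k true) := by
  intro bs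
  induction bs with
  | nil => intro k hk; simp at hk
  | cons b bs ih =>
    intro k hk
    match k with
    | 0 => rfl
    | k + 1 =>
      have h2 : 2*(k+1)+1 = (2*k+1) + 1 + 1 := by ring
      rw [h2]
      show (decode bs).getD (2*k+1) true = _
      exact ih k (by simpa using hk)

lemma decode_injective : Function.Injective decode := by
  intro x
  induction x with
  | nil => intro y h; cases y with
    | nil => rfl
    | cons b bs => simp [decode] at h
  | cons a x ih =>
    intro y h
    cases y with
    | nil => simp [decode] at h
    | cons b bs =>
      simp only [decode, List.cons.injEq] at h
      rw [h.1, ih h.2.2]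

lemma forward_decode {n : ℕ} {w : List Bool} (hw : memL n w)
    (h1 : pmch n P1 w = 0) (h6 : pmch n P6 w = 0) :
    ∃ bs : List Bool, bs.length = n ∧ decode bs = w := by
  have hlt : (occPos w true).length = n := by rw [length_occPos]; exact hw.1
  have hlf : (occPos w false).length = n := by rw [length_occPos]; exact hw.2
  have hlw := memL_length hw
  have hblocks := no_match_blocks hw h1 h6
  refine ⟨(List.range n).map (fun k => w.getD (2*k) true), by simp, ?_⟩
  set bs := (List.range n).map (fun k => w.getD (2*k) true) with hbs
  have hbslen : bs.length = n := by simp [hbs]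
  have hbsget : ∀ k, k < n → bs.getD k true = w.getD (2*k) true := by
    intro k hk
    rw [List.getD_eq_getElem _ _ (by simpa [hbs] using hk)]
    simp [hbs]
  have hodd : ∀ k, k < n → w.getD (2*k+1) true = !(w.getD (2*k) true) := by
    intro k hk
    have he := occPos_pos_lt w true (k := k) (by omega)
    have hf := occPos_pos_lt w false (k := k) (by omega)
    have he2 : w.getD ((occPos w true).getD k 0) true = true := by
      rw [getD_irrel he.1 true false]; simpa using he.2
    have hf2 : w.getD ((occPos w false).getD k 0) true = false := by simpa using hf.2
    rcases hblocks k hk with ⟨hc1, hc2⟩ | ⟨hc1, hc2⟩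
    · rw [hc1] at he2; rw [hc2] at hf2; rw [he2, hf2]; rfl
    · rw [hc1] at he2; rw [hc2] at hf2; rw [he2, hf2]; rfl
  apply List.ext_getElem
  · rw [decode_length, hbslen, hlw]
  · intro j hj1 hj2
    have hj : j < 2 * n := by rwa [hlw] at hj2
    obtain ⟨k, r, hr, hk, hjr⟩ : ∃ k r, r < 2 ∧ k < n ∧ j = 2*k + r := ⟨j/2, j%2, by omega, by omega, by omega⟩
    rw [← List.getD_eq_getElem (decode bs) true hj1, ← List.getD_eq_getElem w true hj2]
    subst hjr
    match r, hr with
    | 0, _ =>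
      rw [show 2*k+0 = 2*k from rfl, decode_getD_even bs k (by omega), hbsget k hk]
    | 1, _ =>
      rw [decode_getD_odd bs k (by omega), hbsget k hk, hodd k hk]

set_option maxHeartbeats 1000000 in
lemma backward_ne {n : ℕ} {bs : List Bool} (hbs : bs.length = n) {i : ℕ}
    (hi1 : 1 ≤ i) (hi2 : i < n) :
    pairedSubword (decode bs) i ≠ P1 ∧ pairedSubword (decode bs) i ≠ P6 := by
  have hlw : (decode bs).length = 2*n := by rw [decode_length, hbs]
  have hlt : (occPos (decode bs) true).length = n := by
    rw [length_occPos, count_decode, hbs]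
  have hlf : (occPos (decode bs) false).length = n := by
    rw [length_occPos, count_decode, hbs]
  have Ba := occPos_decode_bound bs true (i-1) (by omega)
  have Bb := occPos_decode_bound bs true i (by omega)
  have Bc := occPos_decode_bound bs false (i-1) (by omega)
  have Bd := occPos_decode_bound bs false i (by omega)
  have hne1 := occPos_true_ne_false (decode bs) (k := i-1) (l := i-1) (by omega) (by omega)
  have hne2 := occPos_true_ne_false (decode bs) (k := i) (l := i) (by omega) (by omega)
  have hA := occPos_pos_lt (decode bs) true (k := i-1) (by omega)
  have hB := occPos_pos_lt (decode bs) true (k := i) (by omega)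
  have hC := occPos_pos_lt (decode bs) false (k := i-1) (by omega)
  have hD := occPos_pos_lt (decode bs) false (k := i) (by omega)
  have hA2 : (decode bs).getD ((occPos (decode bs) true).getD (i-1) 0) true = true := by
    rw [getD_irrel hA.1 true false]; simpa using hA.2
  have hB2 : (decode bs).getD ((occPos (decode bs) true).getD i 0) true = true := by
    rw [getD_irrel hB.1 true false]; simpa using hB.2
  have hC2 : (decode bs).getD ((occPos (decode bs) false).getD (i-1) 0) true = false := by
    simpa using hC.2
  have hD2 : (decode bs).getD ((occPos (decode bs) false).getD i 0) true = false := by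
    simpa using hD.2
  rcases lt_or_gt_of_ne hne1 with hx | hx <;> rcases lt_or_gt_of_ne hne2 with hy | hy
  · rw [pairedSubword_eval (decode bs) i
        [(occPos (decode bs) true).getD (i-1) 0, (occPos (decode bs) false).getD (i-1) 0,
         (occPos (decode bs) true).getD i 0, (occPos (decode bs) false).getD i 0]
        (by rw [← List.isChain_iff_pairwise]
            simp only [List.isChain_cons_cons, List.isChain_singleton, and_true]
            omega)
        (by intro x hx
            simp only [List.mem_cons, List.not_mem_nil, or_false] at hx
            rcases hx with h|h|h|h <;> subst h <;> omega)
        (fun j => by simp only [List.mem_cons, List.not_mem_nil]; tauto)]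
    simp only [List.map_cons, List.map_nil, hA2, hB2, hC2, hD2]
    simp [P1, P6]
  · rw [pairedSubword_eval (decode bs) i
        [(occPos (decode bs) true).getD (i-1) 0, (occPos (decode bs) false).getD (i-1) 0,
         (occPos (decode bs) false).getD i 0, (occPos (decode bs) true).getD i 0]
        (by rw [← List.isChain_iff_pairwise]
            simp only [List.isChain_cons_cons, List.isChain_singleton, and_true]
            omega)
        (by intro x hx
            simp only [List.mem_cons, List.not_mem_nil, or_false] at hx
            rcases hx with h|h|h|h <;> subst h <;> omega)
        (fun j => by simp only [List.mem_cons, List.not_mem_nil]; tauto)]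
    simp only [List.map_cons, List.map_nil, hA2, hB2, hC2, hD2]
    simp [P1, P6]
  · rw [pairedSubword_eval (decode bs) i
        [(occPos (decode bs) false).getD (i-1) 0, (occPos (decode bs) true).getD (i-1) 0,
         (occPos (decode bs) true).getD i 0, (occPos (decode bs) false).getD i 0]
        (by rw [← List.isChain_iff_pairwise]
            simp only [List.isChain_cons_cons, List.isChain_singleton, and_true]
            omega)
        (by intro x hx
            simp only [List.mem_cons, List.not_mem_nil, or_false] at hx
            rcases hx with h|h|h|h <;> subst h <;> omega)
        (fun j => by simp only [List.mem_cons, List.not_mem_nil]; tauto)]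
    simp only [List.map_cons, List.map_nil, hA2, hB2, hC2, hD2]
    simp [P1, P6]
  · rw [pairedSubword_eval (decode bs) i
        [(occPos (decode bs) false).getD (i-1) 0, (occPos (decode bs) true).getD (i-1) 0,
         (occPos (decode bs) false).getD i 0, (occPos (decode bs) true).getD i 0]
        (by rw [← List.isChain_iff_pairwise]
            simp only [List.isChain_cons_cons, List.isChain_singleton, and_true]
            omega)
        (by intro x hx
            simp only [List.mem_cons, List.not_mem_nil, or_false] at hx
            rcases hx with h|h|h|h <;> subst h <;> omega)
        (fun j => by simp only [List.mem_cons, List.not_mem_nil]; tauto)]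
    simp only [List.map_cons, List.map_nil, hA2, hB2, hC2, hD2]
    simp [P1, P6]

theorem count_P1_and_P6_avoiding (n : ℕ) :
    {w : List Bool | memL n w ∧ pmch n P1 w = 0 ∧ pmch n P6 w = 0}.ncard = 2^n := by
  have hset : {w : List Bool | memL n w ∧ pmch n P1 w = 0 ∧ pmch n P6 w = 0}
      = decode '' {bs : List Bool | bs.length = n} := by
    ext w
    simp only [Set.mem_setOf_eq, Set.mem_image]
    constructor
    · rintro ⟨hw, h1, h6⟩
      obtain ⟨bs, hlen, hdec⟩ := forward_decode hw h1 h6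
      exact ⟨bs, hlen, hdec⟩
    · rintro ⟨bs, hlen, rfl⟩
      refine ⟨⟨?_, ?_⟩, ?_, ?_⟩
      · rw [count_decode]; exact hlen
      · rw [count_decode]; exact hlen
      · apply Finset.card_eq_zero.mpr
        rw [Finset.filter_eq_empty_iff]
        intro i hi
        rw [Finset.mem_Icc] at hi
        have hn2 : 1 ≤ i ∧ i < n := by omega
        exact (backward_ne hlen hn2.1 hn2.2).1
      · apply Finset.card_eq_zero.mpr
        rw [Finset.filter_eq_empty_iff]
        intro i hi
        rw [Finset.mem_Icc] at hi
        have hn2 : 1 ≤ i ∧ i < n := by omega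
        exact (backward_ne hlen hn2.1 hn2.2).2
  rw [hset, Set.ncard_image_of_injective _ decode_injective, ← Nat.card_coe_set_eq]
  have h : Nat.card (List.Vector Bool n) = 2^n := by
    rw [Nat.card_eq_fintype_card]; simp
  exact h
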